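/- Let X be a Bernoulli random variable with Pr[X=0] = 1/2 − ε, and let X⃗ = (X_1,...,X_T) be T independent copies of X. Then there exist absolute constants ε₀ > 0 and c > 0 (independent of ε and T) such that the statistical distance from X⃗ to the uniform distribution on {0,1}^T is at least min{ε₀, c·√T·ε}. -/

import Mathlib

open Finset

/- ### Auxiliary lemmas -/

lemma aux_swap {R : Type*} [CommSemiring R] (f : Bool → R) (T : ℕ) :
    ∑ y : Fin T → Bool, ∏ i, f (y i) = (f true + f false)^T := by
  rw [← Fintype.sum_pow, Fintype.sum_bool, add_comm]

lemma aux_sqrt_prod {ι : Type*} (s : Finset ι) (f : ι → ℝ) (h : ∀ i ∈ s, 0 ≤ f i) :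
    Real.sqrt (∏ i ∈ s, f i) = ∏ i ∈ s, Real.sqrt (f i) := by
  induction s using Finset.cons_induction with
  | empty => simp
  | cons a s ha ih =>
      rw [Finset.prod_cons, Finset.prod_cons, Real.sqrt_mul (h a (Finset.mem_cons_self a s)),
        ih fun i hi => h i (Finset.mem_cons_of_mem hi)]

lemma aux_two_pow_le_factorial (k : ℕ) (hk : 1 ≤ k) : 2 ^ (k - 1) ≤ Nat.factorial k := by
  obtain ⟨m, rfl⟩ := Nat.exists_eq_add_of_le hk
  simpa using Nat.factorial_mul_pow_le_factorial (m := 1) (n := m)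

lemma aux_choose_le (T k : ℕ) : (T.choose k : ℝ) * (Nat.factorial k) ≤ (T:ℝ)^k := by
  have h : T.choose k * Nat.factorial k ≤ T^k := by
    rw [mul_comm, ← Nat.descFactorial_eq_factorial_mul_choose]
    exact Nat.descFactorial_le_pow _ _
  exact_mod_cast h

lemma aux_geom_tail (n : ℕ) : ∑ k ∈ range n, (if k ≤ 2 then (0:ℝ) else (1/2)^k) ≤ 1/4 := by
  have h1 : ∀ k, (if k ≤ 2 then (0:ℝ) else (1/2)^k)
      = (1/2)^k - (if k ≤ 2 then (1/2:ℝ)^k else 0) := by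
    intro k; by_cases h : k ≤ 2 <;> simp [h]
  have h2 : ∑ k ∈ range (n+3), (if k ≤ 2 then (1/2:ℝ)^k else 0)
      = ∑ k ∈ range 3, (if k ≤ 2 then (1/2:ℝ)^k else 0) := by
    refine (Finset.sum_subset (Finset.range_subset_range.2 (by omega)) ?_).symm
    intro k _ hk; simp only [Finset.mem_range] at hk; rw [if_neg (by omega)]
  calc ∑ k ∈ range n, (if k ≤ 2 then (0:ℝ) else (1/2)^k)
      ≤ ∑ k ∈ range (n+3), (if k ≤ 2 then (0:ℝ) else (1/2)^k) := by
        apply Finset.sum_le_sum_of_subset_of_nonneg (Finset.range_subset_range.2 (by omega))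
        intro k _ _; positivity
    _ = ∑ k ∈ range (n+3), (1/2:ℝ)^k - ∑ k ∈ range (n+3), (if k ≤ 2 then (1/2:ℝ)^k else 0) := by
        rw [← Finset.sum_sub_distrib]; exact Finset.sum_congr rfl fun k _ => h1 k
    _ ≤ 2 - 7/4 := by
        have hg : ∑ k ∈ range (n+3), (1/2:ℝ)^k = (1 - (1/2)^(n+3)) / (1 - 1/2) := by
          rw [geom_sum_eq (by norm_num)]; ring
        have h3 : ∑ k ∈ range 3, (if k ≤ 2 then (1/2:ℝ)^k else 0) = 7/4 := by
          norm_num [Finset.sum_range_succ]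
        rw [hg, h2, h3]
        have h4 : (1 - (1/2:ℝ)^(n+3)) / (1 - 1/2) = 2 - 2*(1/2)^(n+3) := by ring
        have : (0:ℝ) ≤ (1/2)^(n+3) := by positivity
        linarith
    _ = 1/4 := by norm_num

/-- The key estimate on the imaginary part of `(co + d·i)^T`. -/
lemma aux_core (T : ℕ) (hT : 1 ≤ T) (d co : ℝ) (hd : 0 ≤ d) (hco0 : 0 ≤ co) (hco1 : co ≤ 1)
    (hB : (T:ℝ) * d ≤ 1) :
    (T:ℝ) * d * co^(T-1) - ((T:ℝ)*d)^3/2 ≤ (((co:ℂ) + (d:ℂ)*Complex.I)^T).im := by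
  have hB0 : (0:ℝ) ≤ (T:ℝ)*d := by positivity
  have expand : ((co:ℂ) + (d:ℂ)*Complex.I)^T
      = ∑ k ∈ range (T+1), ((d:ℂ)*Complex.I)^k * (co:ℂ)^(T-k) * (T.choose k) := by
    rw [add_comm, add_pow]
  rw [expand, Complex.im_sum]
  have hterm : ∀ k, (((d:ℂ)*Complex.I)^k * (co:ℂ)^(T-k) * (T.choose k : ℂ)).im
      = (d^k * co^(T-k) * (T.choose k : ℝ)) * (Complex.I^k).im := by
    intro k
    have h : ((d:ℂ)*Complex.I)^k * (co:ℂ)^(T-k) * (T.choose k : ℂ)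
        = ((d^k * co^(T-k) * (T.choose k : ℝ) : ℝ) : ℂ) * Complex.I^k := by
      push_cast; ring
    rw [h, Complex.im_ofReal_mul]
  have h1mem : 1 ∈ range (T+1) := Finset.mem_range.2 (by omega)
  rw [← Finset.add_sum_erase _ _ h1mem]
  have hf1 : (((d:ℂ)*Complex.I)^1 * (co:ℂ)^(T-1) * (T.choose 1 : ℂ)).im
      = (T:ℝ) * d * co^(T-1) := by
    rw [hterm 1]
    simp
    ring
  rw [hf1]
  have hbound : ∀ k ∈ (range (T+1)).erase 1,
      |(((d:ℂ)*Complex.I)^k * (co:ℂ)^(T-k) * (T.choose k : ℂ)).im|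
      ≤ 2*((T:ℝ)*d)^3 * (if k ≤ 2 then (0:ℝ) else (1/2)^k) := by
    intro k hk
    simp only [Finset.mem_erase, Finset.mem_range] at hk
    obtain ⟨hk1, hk2⟩ := hk
    rw [hterm k]
    match k, hk1 with
    | 0, _ => simp
    | 2, _ => simp [Complex.I_sq]
    | (m+3), _ =>
      rw [if_neg (by omega), abs_mul]
      have him : |(Complex.I^(m+3)).im| ≤ 1 := by
        simpa using Complex.abs_im_le_norm (Complex.I^(m+3))
      have hnn : (0:ℝ) ≤ d^(m+3) * co^(T-(m+3)) * (T.choose (m+3) : ℝ) := by positivity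
      have hfact : ((2:ℝ))^(m+2) ≤ (Nat.factorial (m+3) : ℝ) := by
        exact_mod_cast aux_two_pow_le_factorial (m+3) (by omega)
      have hfpos : (0:ℝ) < (Nat.factorial (m+3) : ℝ) := by
        exact_mod_cast Nat.factorial_pos (m+3)
      calc |d^(m+3) * co^(T-(m+3)) * (T.choose (m+3) : ℝ)| * |(Complex.I^(m+3)).im|
          ≤ (d^(m+3) * co^(T-(m+3)) * (T.choose (m+3) : ℝ)) * 1 := by
            rw [_root_.abs_of_nonneg hnn]
            exact mul_le_mul_of_nonneg_left him hnn
        _ ≤ d^(m+3) * 1 * ((T:ℝ)^(m+3) / (Nat.factorial (m+3))) := by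
            rw [mul_one]
            apply mul_le_mul
            · exact mul_le_mul_of_nonneg_left (pow_le_one₀ hco0 hco1) (by positivity)
            · rw [le_div_iff₀ hfpos]; exact aux_choose_le T (m+3)
            · positivity
            · positivity
        _ = ((T:ℝ)*d)^(m+3) / (Nat.factorial (m+3)) := by rw [mul_pow]; ring
        _ ≤ ((T:ℝ)*d)^3 / (2:ℝ)^(m+2) :=
            div_le_div₀ (by positivity) (pow_le_pow_of_le_one hB0 hB (by omega))
              (by positivity) hfact
        _ = 2*((T:ℝ)*d)^3 * (1/2)^(m+3) := by
            rw [div_eq_mul_inv, one_div, inv_pow]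
            rw [show (2:ℝ)^(m+3) = (2:ℝ)^(m+2) * 2 by rw [pow_succ]]
            field_simp
  have habs : |∑ k ∈ (range (T+1)).erase 1,
      (((d:ℂ)*Complex.I)^k * (co:ℂ)^(T-k) * (T.choose k : ℂ)).im| ≤ ((T:ℝ)*d)^3/2 := by
    calc |∑ k ∈ (range (T+1)).erase 1, (((d:ℂ)*Complex.I)^k * (co:ℂ)^(T-k) * (T.choose k : ℂ)).im|
        ≤ ∑ k ∈ (range (T+1)).erase 1,
            |(((d:ℂ)*Complex.I)^k * (co:ℂ)^(T-k) * (T.choose k : ℂ)).im| :=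
          Finset.abs_sum_le_sum_abs _ _
      _ ≤ ∑ k ∈ (range (T+1)).erase 1, 2*((T:ℝ)*d)^3 * (if k ≤ 2 then (0:ℝ) else (1/2)^k) :=
          Finset.sum_le_sum hbound
      _ ≤ ∑ k ∈ range (T+1), 2*((T:ℝ)*d)^3 * (if k ≤ 2 then (0:ℝ) else (1/2)^k) := by
          apply Finset.sum_le_sum_of_subset_of_nonneg (Finset.erase_subset _ _)
          intro k _ _; positivity
      _ = 2*((T:ℝ)*d)^3 * ∑ k ∈ range (T+1), (if k ≤ 2 then (0:ℝ) else (1/2)^k) := by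
          rw [Finset.mul_sum]
      _ ≤ 2*((T:ℝ)*d)^3 * (1/4) := by
          apply mul_le_mul_of_nonneg_left (aux_geom_tail (T+1)) (by positivity)
      _ = ((T:ℝ)*d)^3/2 := by ring
  have := neg_le_of_abs_le habs
  linarith

lemma aux_lin (u A C : ℝ) (hu0 : 0 ≤ u) (hAl : (75/48)*u ≤ A) (hA0 : 0 ≤ A)
    (hC : 43/96 ≤ C) : (13/20)*u ≤ A*C := by
  have h1 : ((75:ℝ)/48)*u*(43/96) ≤ A*C :=
    mul_le_mul hAl hC (by norm_num) hA0
  linarith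

lemma aux_cube (u A : ℝ) (hu0 : 0 ≤ u) (hu : u ≤ 1/4) (hA0 : 0 ≤ A) (hA : A ≤ 2*u) :
    A^3/2 ≤ (1/4)*u := by
  have h1 : A^3 ≤ (2*u)^3 := pow_le_pow_left₀ hA0 hA 3
  have h2 : u*u ≤ (1/4)*(1/4) := mul_le_mul hu hu hu0 (by norm_num)
  have h3 : u^3 ≤ u/16 := by nlinarith [mul_le_mul_of_nonneg_left h2 hu0]
  nlinarith

lemma aux_abs_sub (a b sa sb : ℝ) (h1 : sa^2 = a) (h2 : sb^2 = b) (h3 : 0 ≤ sa) (h4 : 0 ≤ sb) :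
    a + b - 2*(sa*sb) ≤ |a - b| := by
  rcases abs_cases (a-b) with ⟨h5,h6⟩|⟨h5,h6⟩ <;> rw [h5] <;>
    nlinarith [sq_nonneg (sa-sb), sq_nonneg (sa+sb), mul_nonneg h3 h4]

lemma aux_sq_bound (a : ℝ) (h0 : 0 ≤ a) (h : a^2 ≤ 16/17) : a ≤ 39/40 := by nlinarith

lemma aux_e1 (e : ℝ) : (1/4 - e^2)/4 ≤ ((1/2 - e^2)/2)^2 := by nlinarith [sq_nonneg (e^2)]

set_option maxHeartbeats 2000000 in
/-- `T` i.i.d. copies of a coin with `Pr[X=0] = 1/2 - ε` are at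
statistical distance at least `min{ε₀, c√T·ε}` from uniform on `{0,1}^T`,
for absolute constants `ε₀, c > 0`. -/
theorem stmt11 : ∃ ε₀ > (0 : ℝ), ∃ c > (0 : ℝ), ∀ (T : ℕ) (ε : ℝ),
    0 ≤ ε → ε ≤ 1 / 2 →
    (1 / 2 : ℝ) * ∑ y : Fin T → Bool,
        |(∏ i, if y i then (1 / 2 + ε) else (1 / 2 - ε)) - (1 / 2 : ℝ) ^ T|
      ≥ min ε₀ (c * Real.sqrt T * ε) := by
  refine ⟨1/40, by norm_num, 1/5, by norm_num, ?_⟩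
  intro T ε hε0 hε1
  set p : ℝ := 1/2 + ε with hp
  set q : ℝ := 1/2 - ε with hq
  have hp0 : 0 ≤ p := by simp [hp]; linarith
  have hq0 : 0 ≤ q := by simp [hq]; linarith
  have hP0 : ∀ y : Fin T → Bool, 0 ≤ ∏ i, (if y i then p else q) := by
    intro y
    apply Finset.prod_nonneg
    intro i _
    by_cases h : y i <;> simp [h, hp0, hq0]
  have hLHS0 : 0 ≤ ∑ y : Fin T → Bool, |(∏ i, if y i then p else q) - (1/2:ℝ)^T| := by
    apply Finset.sum_nonneg; intro y _; exact abs_nonneg _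
  -- trivial case T = 0
  rcases Nat.eq_zero_or_pos T with hT0 | hT
  · subst hT0
    have : min (1/40 : ℝ) (1/5 * Real.sqrt 0 * ε) ≤ 0 := by
      simp [Real.sqrt_zero]
    simp only [Nat.cast_zero] at *
    refine le_trans this (by linarith)
  -- now T ≥ 1
  have hT1 : (1:ℝ) ≤ (T:ℝ) := by exact_mod_cast hT
  set st : ℝ := Real.sqrt T with hst
  have hst0 : 0 < st := Real.sqrt_pos.2 (by linarith)
  have hst2 : st^2 = (T:ℝ) := Real.sq_sqrt (by linarith)
  have hst1 : 1 ≤ st := by nlinarith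
  have sumP : ∑ y : Fin T → Bool, ∏ i, (if y i then p else q) = 1 := by
    rw [aux_swap (fun b => if b then p else q) T]
    norm_num [hp, hq]
  have sumU : ∑ _y : Fin T → Bool, ((1:ℝ)/2)^T = 1 := by
    rw [Finset.sum_const, Finset.card_univ, Fintype.card_fun]
    simp only [Fintype.card_bool, Fintype.card_fin, nsmul_eq_mul]
    push_cast
    rw [← mul_pow]
    norm_num
  by_cases hreg : (T:ℝ) * ε^2 ≤ 1/16
  -- SMALL regime
  · have hste : st * ε ≤ 1/4 := by nlinarith [mul_nonneg hst0.le hε0]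
    refine le_trans (min_le_right _ _) ?_
    set x : ℝ := st⁻¹ with hxd
    have hx0 : 0 < x := by positivity
    have hx1 : x ≤ 1 := by
      rw [hxd]; exact inv_le_one_of_one_le₀ hst1
    have hxabs : |x| ≤ 1 := by rw [abs_of_pos hx0]; exact hx1
    have hx2 : x^2 = ((T:ℝ))⁻¹ := by rw [hxd, ← hst2]; field_simp
    set co : ℝ := Real.cos x with hco
    set s : ℝ := Real.sin x with hsin
    have hco1 : co ≤ 1 := Real.cos_le_one x
    have hcob := Real.cos_bound hxabs
    have hsinb := Real.sin_bound hxabs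
    rw [abs_of_pos hx0] at hcob hsinb
    have hcolb : 1 - x^2/2 - x^4*(5/96) ≤ co := by
      have := abs_le.1 hcob
      linarith [this.1]
    have hsinlb : x - x^3/6 - x^4*(5/96) ≤ s := by
      have := abs_le.1 hsinb
      have hx5 : x^5 ≤ x^4 := pow_le_pow_of_le_one hx0.le hx1 (by norm_num : 4 ≤ 5)
      linarith [this.1, hx5, pow_nonneg hx0.le 4]
    have hs0 : 0 ≤ s := Real.sin_nonneg_of_nonneg_of_le_pi hx0.le
      (by linarith [Real.pi_gt_three])
    have hsx : s ≤ x := Real.sin_le hx0.le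
    have hx2le : x^2 ≤ 1 := by nlinarith
    have hx3 : x^3 ≤ x := by
      simpa using pow_le_pow_of_le_one hx0.le hx1 (by norm_num : 1 ≤ 3)
    have hx4 : x^4 ≤ x := by
      simpa using pow_le_pow_of_le_one hx0.le hx1 (by norm_num : 1 ≤ 4)
    have hx41 : x^4 ≤ 1 := le_trans hx4 hx1
    have hslb : (75/96) * x ≤ s := by linarith
    have hco0 : 0 ≤ co := by linarith
    set d : ℝ := 2*ε*s with hd
    have hd0 : 0 ≤ d := by positivity
    have hTx : (T:ℝ) * x = st := by
      rw [hxd, ← hst2]; field_simp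
    have hT0' : (0:ℝ) ≤ (T:ℝ) := by positivity
    have h1Ts : (T:ℝ)*s ≤ st := by
      rw [← hTx]; exact mul_le_mul_of_nonneg_left hsx hT0'
    have hB : (T:ℝ)*d ≤ 2*(st*ε) := by
      calc (T:ℝ)*d = 2*ε*((T:ℝ)*s) := by ring
        _ ≤ 2*ε*st := by
            apply mul_le_mul_of_nonneg_left h1Ts (by linarith)
        _ = 2*(st*ε) := by ring
    have hB1 : (T:ℝ)*d ≤ 1 := by linarith
    -- cos^T lower bound
    have hcoT : (43/96 : ℝ) ≤ co^(T-1) := by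
      have h1 : co^(T-1) ≥ co^T := by
        apply pow_le_pow_of_le_one hco0 hco1
        omega
      have h2 : (1 : ℝ) + (T:ℝ)*(co - 1) ≤ co^T := by
        have := one_add_mul_le_pow (a := co - 1) (by linarith) T
        simpa using this
      have h3 : (T:ℝ) * x^2 = 1 := by
        rw [hx2]; field_simp
      have h4 : (T:ℝ) * x^4 ≤ 1 := by
        have h4a : (T:ℝ)*x^4 = ((T:ℝ)*x^2)*x^2 := by ring
        rw [h4a, h3, one_mul]; exact hx2le
      have h5 : -(1/2 : ℝ) - 5/96 ≤ (T:ℝ)*(co-1) := by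
        have h6 : -(x^2/2) - x^4*(5/96) ≤ co - 1 := by linarith
        have h7 := mul_le_mul_of_nonneg_left h6 hT0'
        have h8 : (T:ℝ)*(-(x^2/2) - x^4*(5/96))
            = -(((T:ℝ)*x^2)/2) - ((T:ℝ)*x^4)*(5/96) := by ring
        rw [h8, h3] at h7
        linarith
      linarith
    -- the test function: product of unit complex numbers
    set w : Bool → ℂ := fun b => (co:ℂ) + ((if b then s else -s : ℝ) : ℂ) * Complex.I with hw
    have hwabs : ∀ b, ‖w b‖ = 1 := by
      intro b
      cases b
      · have : w false = Complex.cos (-x : ℝ) + Complex.sin (-x : ℝ) * Complex.I := by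
          simp [hw, hco, hsin, ← Complex.ofReal_cos, ← Complex.ofReal_sin, Real.cos_neg,
            Real.sin_neg]
        rw [this, Complex.norm_cos_add_sin_mul_I]
      · have : w true = Complex.cos (x : ℝ) + Complex.sin (x : ℝ) * Complex.I := by
          simp [hw, hco, hsin, ← Complex.ofReal_cos, ← Complex.ofReal_sin]
        rw [this, Complex.norm_cos_add_sin_mul_I]
    have hfabs : ∀ y : Fin T → Bool, |(∏ i, w (y i)).im| ≤ 1 := by
      intro y
      calc |(∏ i, w (y i)).im| ≤ ‖∏ i, w (y i)‖ := Complex.abs_im_le_norm _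
        _ = ∏ i, ‖w (y i)‖ := by rw [norm_prod]
        _ = 1 := by simp [hwabs]
    -- identity for the P-expectation
    have hPid : ∑ y : Fin T → Bool, (∏ i, (if y i then p else q)) * (∏ i, w (y i)).im
        = (((co:ℂ) + ((d:ℝ):ℂ)*Complex.I)^T).im := by
      have h1 : ∀ y : Fin T → Bool, (∏ i, (if y i then p else q)) * (∏ i, w (y i)).im
          = (∏ i, (((if y i then p else q : ℝ)):ℂ) * w (y i)).im := by
        intro y
        rw [Finset.prod_mul_distrib, ← Complex.ofReal_prod, Complex.im_ofReal_mul]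
      rw [Finset.sum_congr rfl fun y _ => h1 y, ← Complex.im_sum]
      congr 1
      rw [aux_swap (fun b => (((if b then p else q : ℝ)):ℂ) * w b) T]
      congr 1
      simp only [hw, if_true, if_false]
      push_cast [hp, hq, hd]
      ring
    -- identity for the U-expectation
    have hUid : ∑ y : Fin T → Bool, ((1:ℝ)/2)^T * (∏ i, w (y i)).im = 0 := by
      have h1 : ∀ y : Fin T → Bool, ((1:ℝ)/2)^T * (∏ i, w (y i)).im
          = (∏ i, (((1:ℝ)/2 : ℝ):ℂ) * w (y i)).im := by
        intro y
        rw [Finset.prod_mul_distrib, Finset.prod_const, Finset.card_univ, Fintype.card_fin,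
          ← Complex.ofReal_pow, Complex.im_ofReal_mul]
      rw [Finset.sum_congr rfl fun y _ => h1 y, ← Complex.im_sum]
      rw [aux_swap (fun b => (((1:ℝ)/2 : ℝ):ℂ) * w b) T]
      have h2 : ((((1:ℝ)/2 : ℝ):ℂ) * w true + (((1:ℝ)/2 : ℝ):ℂ) * w false) = ((co:ℝ):ℂ) := by
        simp only [hw, if_true, if_false]
        push_cast
        ring
      rw [h2, ← Complex.ofReal_pow, Complex.ofReal_im]
    -- pointwise bound
    have hpw : ∀ y : Fin T → Bool,
        ((∏ i, (if y i then p else q)) - ((1:ℝ)/2)^T) * (∏ i, w (y i)).im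
        ≤ |(∏ i, (if y i then p else q)) - ((1:ℝ)/2)^T| := by
      intro y
      calc ((∏ i, (if y i then p else q)) - ((1:ℝ)/2)^T) * (∏ i, w (y i)).im
          ≤ |((∏ i, (if y i then p else q)) - ((1:ℝ)/2)^T) * (∏ i, w (y i)).im| := le_abs_self _
        _ = |(∏ i, (if y i then p else q)) - ((1:ℝ)/2)^T| * |(∏ i, w (y i)).im| := abs_mul _ _
        _ ≤ |(∏ i, (if y i then p else q)) - ((1:ℝ)/2)^T| * 1 :=
            mul_le_mul_of_nonneg_left (hfabs y) (abs_nonneg _)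
        _ = _ := mul_one _
    -- main estimate
    have hmain : (2/5) * (st * ε) ≤ (((co:ℂ) + ((d:ℝ):ℂ)*Complex.I)^T).im := by
      have hcore := aux_core T hT d co hd0 hco0 hco1 hB1
      have hu0 : 0 ≤ st*ε := mul_nonneg hst0.le hε0
      have h2 : (75/96)*st ≤ (T:ℝ)*s := by
        calc (75/96)*st = (T:ℝ)*((75/96)*x) := by
              rw [mul_comm (75/96 : ℝ) x, ← mul_assoc, hTx]; ring
          _ ≤ (T:ℝ)*s := mul_le_mul_of_nonneg_left hslb hT0'
      have hAl : (75/48)*(st*ε) ≤ (T:ℝ)*d := by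
        calc (75/48)*(st*ε) = 2*ε*((75/96)*st) := by ring
          _ ≤ 2*ε*((T:ℝ)*s) := mul_le_mul_of_nonneg_left h2 (by linarith)
          _ = (T:ℝ)*d := by ring
      have hAC := aux_lin (st*ε) ((T:ℝ)*d) (co^(T-1)) hu0 hAl (by positivity) hcoT
      have hcube := aux_cube (st*ε) ((T:ℝ)*d) hu0 hste (by positivity) hB
      linarith
    -- put everything together
    have hsum : ∑ y : Fin T → Bool,
        ((∏ i, (if y i then p else q)) - ((1:ℝ)/2)^T) * (∏ i, w (y i)).im
        = (((co:ℂ) + ((d:ℝ):ℂ)*Complex.I)^T).im := by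
      have : ∀ y : Fin T → Bool,
          ((∏ i, (if y i then p else q)) - ((1:ℝ)/2)^T) * (∏ i, w (y i)).im
          = (∏ i, (if y i then p else q)) * (∏ i, w (y i)).im
            - ((1:ℝ)/2)^T * (∏ i, w (y i)).im := by
        intro y; ring
      rw [Finset.sum_congr rfl fun y _ => this y, Finset.sum_sub_distrib, hPid, hUid, sub_zero]
    have hfinal : (2/5) * (st * ε)
        ≤ ∑ y : Fin T → Bool, |(∏ i, (if y i then p else q)) - ((1:ℝ)/2)^T| := by
      calc (2/5) * (st * ε) ≤ (((co:ℂ) + ((d:ℝ):ℂ)*Complex.I)^T).im := hmain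
        _ = ∑ y : Fin T → Bool,
            ((∏ i, (if y i then p else q)) - ((1:ℝ)/2)^T) * (∏ i, w (y i)).im := hsum.symm
        _ ≤ ∑ y : Fin T → Bool, |(∏ i, (if y i then p else q)) - ((1:ℝ)/2)^T| :=
            Finset.sum_le_sum fun y _ => hpw y
    calc (1/5 : ℝ) * st * ε = (1/2) * ((2/5)*(st*ε)) := by ring
      _ ≤ (1/2) * ∑ y : Fin T → Bool, |(∏ i, (if y i then p else q)) - ((1:ℝ)/2)^T| := by
          linarith
  -- LARGE regime
  · push_neg at hreg
    refine le_trans (min_le_left _ _) ?_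
    set ρ : ℝ := Real.sqrt (p * (1/2)) + Real.sqrt (q * (1/2)) with hρ
    have hρ0 : 0 ≤ ρ := by positivity
    have sumPU : ∑ y : Fin T → Bool,
        Real.sqrt ((∏ i, (if y i then p else q)) * ((1:ℝ)/2)^T) = ρ^T := by
      have h1 : ∀ y : Fin T → Bool,
          Real.sqrt ((∏ i, (if y i then p else q)) * ((1:ℝ)/2)^T)
          = ∏ i, Real.sqrt ((if y i then p else q) * (1/2)) := by
        intro y
        have h2 : (∏ i, (if y i then p else q)) * ((1:ℝ)/2)^T
            = ∏ i, ((if y i then p else q) * (1/2)) := by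
          rw [Finset.prod_mul_distrib, Finset.prod_const, Finset.card_univ, Fintype.card_fin]
        rw [h2]
        apply aux_sqrt_prod
        intro i _
        by_cases h : y i <;> simp [h] <;> linarith
      rw [Finset.sum_congr rfl fun y _ => h1 y,
        aux_swap (fun b => Real.sqrt ((if b then p else q) * (1/2))) T]
      simp [hρ]
    have hpw : ∀ y : Fin T → Bool,
        (∏ i, (if y i then p else q)) + ((1:ℝ)/2)^T
          - 2 * Real.sqrt ((∏ i, (if y i then p else q)) * ((1:ℝ)/2)^T)
        ≤ |(∏ i, (if y i then p else q)) - ((1:ℝ)/2)^T| := by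
      intro y
      set a : ℝ := ∏ i, (if y i then p else q) with ha
      set b : ℝ := ((1:ℝ)/2)^T with hb
      have ha0 : 0 ≤ a := hP0 y
      have hb0 : (0:ℝ) ≤ b := by positivity
      have hsq : Real.sqrt (a*b) = Real.sqrt a * Real.sqrt b := Real.sqrt_mul ha0 b
      rw [hsq]
      exact aux_abs_sub a b (Real.sqrt a) (Real.sqrt b) (Real.sq_sqrt ha0) (Real.sq_sqrt hb0)
        (Real.sqrt_nonneg a) (Real.sqrt_nonneg b)
    have hρ2 : ρ^2 ≤ 1 - ε^2 := by
      have hp2 : (0:ℝ) ≤ p*(1/2) := by positivity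
      have hq2 : (0:ℝ) ≤ q*(1/2) := by positivity
      have h1 : Real.sqrt (p*(1/2)) ^ 2 = p*(1/2) := Real.sq_sqrt hp2
      have h2 : Real.sqrt (q*(1/2)) ^ 2 = q*(1/2) := Real.sq_sqrt hq2
      have h3 : Real.sqrt (p*(1/2)) * Real.sqrt (q*(1/2))
          = Real.sqrt ((p*(1/2))*(q*(1/2))) := (Real.sqrt_mul hp2 _).symm
      have h4 : (p*(1/2))*(q*(1/2)) = (1/4 - ε^2)/4 := by rw [hp, hq]; ring
      have h5 : Real.sqrt ((1/4 - ε^2)/4) ≤ (1/2 - ε^2)/2 := by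
        have hε2 : ε^2 ≤ 1/4 := by nlinarith
        calc Real.sqrt ((1/4 - ε^2)/4) ≤ Real.sqrt (((1/2 - ε^2)/2)^2) :=
              Real.sqrt_le_sqrt (aux_e1 ε)
          _ = (1/2 - ε^2)/2 := Real.sqrt_sq (by linarith)
      have h6 : ρ^2 = p*(1/2) + q*(1/2)
          + 2*(Real.sqrt (p*(1/2)) * Real.sqrt (q*(1/2))) := by
        rw [hρ]
        rw [show (Real.sqrt (p*(1/2)) + Real.sqrt (q*(1/2)))^2
            = Real.sqrt (p*(1/2))^2 + Real.sqrt (q*(1/2))^2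
              + 2*(Real.sqrt (p*(1/2)) * Real.sqrt (q*(1/2))) from by ring, h1, h2]
      have h7 : p*(1/2) + q*(1/2) = 1/2 := by rw [hp, hq]; ring
      rw [h6, h3, h4, h7]
      linarith
    have hρT : ρ^T ≤ 39/40 := by
      have h1 : (ρ^T)^2 = (ρ^2)^T := by rw [← pow_mul, ← pow_mul, Nat.mul_comm]
      have h2 : (ρ^2)^T ≤ (1 - ε^2)^T := pow_le_pow_left₀ (sq_nonneg ρ) hρ2 T
      have hε2 : ε^2 ≤ 1/4 := by nlinarith
      have hε4 : (0:ℝ) ≤ ε^2*ε^2 := by positivity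
      have h3 : (1 - ε^2)^T * (1 + ε^2)^T ≤ 1 := by
        rw [← mul_pow]
        apply pow_le_one₀ (by nlinarith) (by nlinarith)
      have h4 : (1:ℝ) + (T:ℝ)*ε^2 ≤ (1 + ε^2)^T := by
        have := one_add_mul_le_pow (a := ε^2) (by nlinarith) T
        simpa using this
      have h5 : (17/16 : ℝ) ≤ (1 + ε^2)^T := by linarith
      have h6 : (0:ℝ) ≤ (1 - ε^2)^T := pow_nonneg (by linarith) T
      have h7 : (1 - ε^2)^T ≤ 16/17 := by
        have h8 := mul_le_mul_of_nonneg_left h5 h6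
        have h9 : (1 - ε^2)^T * (17/16) ≤ 1 := le_trans h8 h3
        linarith
      have h10 : (ρ^T)^2 ≤ 16/17 := by rw [h1]; linarith
      exact aux_sq_bound _ (pow_nonneg hρ0 T) h10
    have hsum : 2 - 2*ρ^T ≤ ∑ y : Fin T → Bool, |(∏ i, (if y i then p else q)) - ((1:ℝ)/2)^T| := by
      have h1 : ∑ y : Fin T → Bool,
          ((∏ i, (if y i then p else q)) + ((1:ℝ)/2)^T
            - 2 * Real.sqrt ((∏ i, (if y i then p else q)) * ((1:ℝ)/2)^T))
          = 2 - 2*ρ^T := by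
        rw [Finset.sum_sub_distrib, Finset.sum_add_distrib, sumP, sumU, ← Finset.mul_sum, sumPU]
        ring
      rw [← h1]
      exact Finset.sum_le_sum fun y _ => hpw y
    calc (1/40 : ℝ) ≤ (1/2) * (2 - 2*(39/40)) := by norm_num
      _ ≤ (1/2) * (2 - 2*ρ^T) := by linarith
      _ ≤ (1/2) * ∑ y : Fin T → Bool, |(∏ i, (if y i then p else q)) - ((1:ℝ)/2)^T| := by
          linarith
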